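/- Suppose the real sequences (t_n)_{n≥0} satisfy the recursion t_{n+1} = a·t_n - t_{n-1} with |a| = 2. If |t_1| > |t_0| > 0, then the sequence (|t_n|)_{n≥1} is strictly increasing: |t_{n+1}| > |t_n| for all n ≥ 1. -/
import Mathlib

private lemma arith_case (t : ℕ → ℝ)
    (hrec : ∀ n : ℕ, t (n + 2) = 2 * t (n + 1) - t n)
    (h10 : |t 1| > |t 0|) :
    ∀ n : ℕ, |t (n + 1)| > |t n| := by
  have harith : ∀ n : ℕ, t n = t 0 + n * (t 1 - t 0) := by
    intro n
    induction n using Nat.strong_induction_on with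
    | _ n ih =>
      match n with
      | 0 => simp
      | 1 => simp
      | (m + 2) =>
        have h1 := ih (m + 1) (by omega)
        have h2 := ih m (by omega)
        rw [hrec m, h1, h2]
        push_cast
        ring
  have hsq : t 1 ^ 2 > t 0 ^ 2 := sq_lt_sq.2 h10
  intro n
  rw [gt_iff_lt, ← sq_lt_sq]
  rw [harith n, harith (n + 1)]
  have hn : (0:ℝ) ≤ (n:ℝ) := Nat.cast_nonneg n
  push_cast
  nlinarith [sq_nonneg (t 1 - t 0), mul_nonneg hn (sq_nonneg (t 1 - t 0))]

theorem trace_recursion_strict_mono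
    (a : ℝ) (ha : |a| = 2) (t : ℕ → ℝ)
    (hrec : ∀ n : ℕ, t (n + 2) = a * t (n + 1) - t n)
    (h10 : |t 1| > |t 0|) (h0 : |t 0| > 0) :
    ∀ n : ℕ, 1 ≤ n → |t (n + 1)| > |t n| := by
  rcases abs_eq (by norm_num : (0:ℝ) ≤ 2) |>.mp ha with ha2 | ha2
  · subst ha2
    intro n _
    exact arith_case t hrec h10 n
  · subst ha2
    set u : ℕ → ℝ := fun n => (-1 : ℝ) ^ n * t n with hu
    have habs : ∀ n, |u n| = |t n| := by
      intro n
      simp [hu, abs_mul, abs_pow]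
    have hurec : ∀ n : ℕ, u (n + 2) = 2 * u (n + 1) - u n := by
      intro n
      simp only [hu, hrec n]
      ring
    intro n _
    rw [← habs (n + 1), ← habs n]
    exact arith_case u hurec (by rw [habs 0, habs 1]; exact h10) n
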